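/- Fix a real number C > 0 and define the rational functions of a real variable x: H̲*(x) = C^2*x^3/(2*(1+C)*(1+C^2)) + C*x^5/(2*(1+C)^2*(2-x^2)), T̲*(x) = C*x^2/(1+C) + x^3/(2*(1+C)*(1+C^2)) + x^4/(2*(1+C)^2*(2-x)), H(x) = x^2/3 + 2*C*x^4/(3*(1+C)*(2-x^2)), T(x) = 2*x^3/(3*(1+C)*(2-x)), and G(x) = (H(x)+T(x)) * H̲*(x) / (1 - T̲*(x)). Then 1 - T̲*(1) ≠ 0, G(1) = 1, the derivative of G at x = 1 equals m(C) = 2*(6*C^5 + 41*C^4 + 56*C^3 + 51*C^2 + 38*C + 12) / (3*C*(C+1)*(2*C^2 + C + 1)), and m(C)/C tends to 2 as C → ∞. -/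

import Mathlib

set_option maxHeartbeats 1600000


/-- For the nearest-neighbor self-attraction GSAW with weight `C > 0` on the two-sided
square ladder, the trapping-length generating function `G = (H + T)·H̲*/(1 - T̲*)` is
well defined at `x = 1`, where it equals 1 (the walk is trapped with probability 1); its
derivative at `x = 1` is the mean trapping length
`m(C) = 2(6C^5+41C^4+56C^3+51C^2+38C+12)/(3C(C+1)(2C^2+C+1))`, and `m(C) ~ 2C` as
`C → ∞`. -/
theorem biased_trapping_length_two_sided_square (C : ℝ) (hC : 0 < C)
    (Hb Tb H T G m : ℝ → ℝ)
    (hHb : ∀ x : ℝ, Hb x = C ^ 2 * x ^ 3 / (2 * (1 + C) * (1 + C ^ 2)) +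
      C * x ^ 5 / (2 * (1 + C) ^ 2 * (2 - x ^ 2)))
    (hTb : ∀ x : ℝ, Tb x = C * x ^ 2 / (1 + C) +
      x ^ 3 / (2 * (1 + C) * (1 + C ^ 2)) + x ^ 4 / (2 * (1 + C) ^ 2 * (2 - x)))
    (hH : ∀ x : ℝ, H x = x ^ 2 / 3 + 2 * C * x ^ 4 / (3 * (1 + C) * (2 - x ^ 2)))
    (hT : ∀ x : ℝ, T x = 2 * x ^ 3 / (3 * (1 + C) * (2 - x)))
    (hG : ∀ x : ℝ, G x = (H x + T x) * Hb x / (1 - Tb x))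
    (hm : ∀ c : ℝ, m c = 2 * (6 * c ^ 5 + 41 * c ^ 4 + 56 * c ^ 3 + 51 * c ^ 2 +
      38 * c + 12) / (3 * c * (c + 1) * (2 * c ^ 2 + c + 1))) :
    1 - Tb 1 ≠ 0 ∧
    G 1 = 1 ∧
    deriv G 1 = m C ∧
    Filter.Tendsto (fun c : ℝ => m c / c) Filter.atTop (nhds 2) := by
  have hC1 : (0:ℝ) < 1 + C := by linarith
  have hC1' : (1 + C) ≠ 0 := ne_of_gt hC1
  have hC2 : (0:ℝ) < 1 + C ^ 2 := by positivity
  have hC2' : (1 + C ^ 2) ≠ 0 := ne_of_gt hC2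
  have hCne : C ≠ 0 := ne_of_gt hC
  -- key value of 1 - Tb 1
  have hTb1 : 1 - Tb 1 = C * (2 * C ^ 2 + C + 1) / (2 * (1 + C) ^ 2 * (1 + C ^ 2)) := by
    rw [hTb]; field_simp; ring
  have hTbNe : 1 - Tb 1 ≠ 0 := by
    rw [hTb1]; positivity
  -- substitute all functions
  have hGf : G = fun x => (H x + T x) * Hb x / (1 - Tb x) := funext hG
  have hHbf : Hb = fun x : ℝ => C ^ 2 * x ^ 3 / (2 * (1 + C) * (1 + C ^ 2)) +
      C * x ^ 5 / (2 * (1 + C) ^ 2 * (2 - x ^ 2)) := funext hHb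
  have hTbf : Tb = fun x : ℝ => C * x ^ 2 / (1 + C) +
      x ^ 3 / (2 * (1 + C) * (1 + C ^ 2)) + x ^ 4 / (2 * (1 + C) ^ 2 * (2 - x)) := funext hTb
  have hHf : H = fun x : ℝ => x ^ 2 / 3 + 2 * C * x ^ 4 / (3 * (1 + C) * (2 - x ^ 2)) :=
    funext hH
  have hTf : T = fun x : ℝ => 2 * x ^ 3 / (3 * (1 + C) * (2 - x)) := funext hT
  refine ⟨hTbNe, ?_, ?_, ?_⟩
  · -- G 1 = 1
    rw [hG, hH, hT, hHb]
    rw [show (1:ℝ) - Tb 1 = C * (2 * C ^ 2 + C + 1) / (2 * (1 + C) ^ 2 * (1 + C ^ 2)) from hTb1]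
    have h2 : (2:ℝ) * C ^ 2 + C + 1 ≠ 0 := by positivity
    field_simp
    ring
  · -- derivative
    -- basic blocks at x = 1
    have hx2 : HasDerivAt (fun x : ℝ => x ^ 2) 2 1 := by simpa using hasDerivAt_pow 2 (1:ℝ)
    have hx3 : HasDerivAt (fun x : ℝ => x ^ 3) 3 1 := by simpa using hasDerivAt_pow 3 (1:ℝ)
    have hx4 : HasDerivAt (fun x : ℝ => x ^ 4) 4 1 := by simpa using hasDerivAt_pow 4 (1:ℝ)
    have hx5 : HasDerivAt (fun x : ℝ => x ^ 5) 5 1 := by simpa using hasDerivAt_pow 5 (1:ℝ)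
    have hd2 : HasDerivAt (fun x : ℝ => 2 - x ^ 2) (-2) 1 := hx2.const_sub 2
    have hd1 : HasDerivAt (fun x : ℝ => 2 - x) (-1) 1 := by
      simpa using (hasDerivAt_id (1:ℝ)).const_sub 2
    have hne2 : (2 * (1 + C) ^ 2 * (2 - (1:ℝ) ^ 2)) ≠ 0 := by
      norm_num; positivity
    have hne1 : (2 * (1 + C) ^ 2 * (2 - (1:ℝ))) ≠ 0 := by
      norm_num; positivity
    have hne3 : (3 * (1 + C) * (2 - (1:ℝ) ^ 2)) ≠ 0 := by
      norm_num; positivity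
    have hne4 : (3 * (1 + C) * (2 - (1:ℝ))) ≠ 0 := by
      norm_num; positivity
    have hHb' : HasDerivAt (fun x : ℝ => C ^ 2 * x ^ 3 / (2 * (1 + C) * (1 + C ^ 2)) +
        C * x ^ 5 / (2 * (1 + C) ^ 2 * (2 - x ^ 2)))
        (3 * C ^ 2 / (2 * (1 + C) * (1 + C ^ 2)) + 7 * C / (2 * (1 + C) ^ 2)) 1 := by
      refine HasDerivAt.congr_deriv (((hx3.const_mul (C ^ 2)).div_const (2 * (1 + C) * (1 + C ^ 2))).add
        ((hx5.const_mul C).div (hd2.const_mul (2 * (1 + C) ^ 2)) hne2)) ?_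
      norm_num; field_simp; ring
    have hTb' : HasDerivAt (fun x : ℝ => C * x ^ 2 / (1 + C) +
        x ^ 3 / (2 * (1 + C) * (1 + C ^ 2)) + x ^ 4 / (2 * (1 + C) ^ 2 * (2 - x)))
        (2 * C / (1 + C) + 3 / (2 * (1 + C) * (1 + C ^ 2)) + 5 / (2 * (1 + C) ^ 2)) 1 := by
      refine HasDerivAt.congr_deriv ((((hx2.const_mul C).div_const (1 + C)).add
        (hx3.div_const (2 * (1 + C) * (1 + C ^ 2)))).add
        (hx4.div (hd1.const_mul (2 * (1 + C) ^ 2)) hne1)) ?_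
      norm_num; field_simp; ring
    have hH' : HasDerivAt (fun x : ℝ => x ^ 2 / 3 + 2 * C * x ^ 4 / (3 * (1 + C) * (2 - x ^ 2)))
        (2 / 3 + 4 * C / (1 + C)) 1 := by
      refine HasDerivAt.congr_deriv ((hx2.div_const 3).add
        ((hx4.const_mul (2 * C)).div (hd2.const_mul (3 * (1 + C))) hne3)) ?_
      norm_num; field_simp; ring
    have hT' : HasDerivAt (fun x : ℝ => 2 * x ^ 3 / (3 * (1 + C) * (2 - x)))
        (8 / (3 * (1 + C))) 1 := by
      refine HasDerivAt.congr_deriv ((hx3.const_mul 2).div (hd1.const_mul (3 * (1 + C))) hne4) ?_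
      norm_num; field_simp; ring
    have hG' := ((hH'.add hT').mul hHb').div (hTb'.const_sub 1) ((hTb 1) ▸ hTbNe)
    have h2 : (2:ℝ) * C ^ 2 + C + 1 ≠ 0 := by positivity
    have e1 : (1:ℝ) ^ 2 / 3 + 2 * C * 1 ^ 4 / (3 * (1 + C) * (2 - 1 ^ 2)) +
        2 * 1 ^ 3 / (3 * (1 + C) * (2 - 1)) = 1 := by
      field_simp; ring
    have e2 : C ^ 2 * (1:ℝ) ^ 3 / (2 * (1 + C) * (1 + C ^ 2)) +
        C * 1 ^ 5 / (2 * (1 + C) ^ 2 * (2 - 1 ^ 2)) =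
        C * (2 * C ^ 2 + C + 1) / (2 * (1 + C) ^ 2 * (1 + C ^ 2)) := by
      field_simp; ring
    have e3 : (1:ℝ) - (C * 1 ^ 2 / (1 + C) + 1 ^ 3 / (2 * (1 + C) * (1 + C ^ 2)) +
        1 ^ 4 / (2 * (1 + C) ^ 2 * (2 - 1))) =
        C * (2 * C ^ 2 + C + 1) / (2 * (1 + C) ^ 2 * (1 + C ^ 2)) := by
      field_simp; ring
    rw [hGf, hHf, hTf, hHbf, hTbf]
    erw [hG'.deriv]; simp only [Pi.add_apply, Pi.mul_apply]; rw [e1, e2, e3, hm]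
    field_simp
    ring
  · -- asymptotics
    have hphi : Filter.Tendsto
        (fun t : ℝ => 2 * (6 + 41 * t + 56 * t ^ 2 + 51 * t ^ 3 + 38 * t ^ 4 + 12 * t ^ 5) /
          (3 * (1 + t) * (2 + t + t ^ 2))) (nhds 0) (nhds 2) := by
      have : ContinuousAt (fun t : ℝ =>
          2 * (6 + 41 * t + 56 * t ^ 2 + 51 * t ^ 3 + 38 * t ^ 4 + 12 * t ^ 5) /
          (3 * (1 + t) * (2 + t + t ^ 2))) 0 := by
        apply ContinuousAt.div
        · fun_prop
        · fun_prop
        · norm_num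
      have h0 : (2 * (6 + 41 * (0:ℝ) + 56 * 0 ^ 2 + 51 * 0 ^ 3 + 38 * 0 ^ 4 + 12 * 0 ^ 5) /
          (3 * (1 + 0) * (2 + 0 + 0 ^ 2))) = 2 := by norm_num
      have h := this.tendsto
      rw [h0] at h
      exact h
    have hcomp := hphi.comp tendsto_inv_atTop_zero
    apply hcomp.congr'
    filter_upwards [Filter.eventually_gt_atTop (0:ℝ)] with c hc
    have hcne : c ≠ 0 := ne_of_gt hc
    simp only [Function.comp]
    rw [hm]
    have h1 : (1:ℝ) + c⁻¹ ≠ 0 := by positivity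
    have h2 : (2:ℝ) + c⁻¹ + c⁻¹ ^ 2 ≠ 0 := by positivity
    field_simp
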